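/- Let h ∈ (0,1) and ρ ∈ (0, h). Then there exists λ̄ ∈ (0, ρ] such that for every λ ∈ (0, λ̄] and every r ≥ 1−ρ one has F_λ'(r) ≥ F'(1−ρ) > 0; in particular min_{r ≥ 1−ρ} |F_λ'(r)| = F'(1−ρ). -/

import Mathlib

lemma glue_hasDerivAt {F f g : ℝ → ℝ} {a d : ℝ} (hf : HasDerivAt f d a) (hg : HasDerivAt g d a)
    (h1 : ∀ᶠ r in nhds a, r ≤ a → F r = f r) (h2 : ∀ᶠ r in nhds a, a ≤ r → F r = g r) :
    HasDerivAt F d a := by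
  have ha1 : F a = f a := h1.self_of_nhds le_rfl
  have ha2 : F a = g a := h2.self_of_nhds le_rfl
  have H1 : HasDerivWithinAt F d (Set.Iic a) a := by
    refine hf.hasDerivWithinAt.congr_of_eventuallyEq ?_ ha1
    filter_upwards [nhdsWithin_le_nhds h1, self_mem_nhdsWithin] with r hr hrs
    exact hr hrs
  have H2 : HasDerivWithinAt F d (Set.Ici a) a := by
    refine hg.hasDerivWithinAt.congr_of_eventuallyEq ?_ ha2
    filter_upwards [nhdsWithin_le_nhds h2, self_mem_nhdsWithin] with r hr hrs
    exact hr hrs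
  have := H1.union H2
  rw [Set.Iic_union_Ici] at this
  exact hasDerivWithinAt_univ.mp this

lemma hasDerivAt_branch_cubic (h r : ℝ) :
    HasDerivAt (fun r : ℝ => -r^3/3 - h*(r^2/2 + r)) (-r^2 - h*(r+1)) r := by
  have key := (((hasDerivAt_pow 3 r).div_const 3).neg).sub
    ((((hasDerivAt_pow 2 r).div_const 2).add (hasDerivAt_id r)).const_mul h)
  have e : (fun r : ℝ => -r^3/3 - h*(r^2/2 + r))
      = fun x : ℝ => -(x^3/3) - h * (x^2/2 + id x) := by funext x; simp [id]; ring
  rw [e]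
  refine key.congr_deriv ?_
  push_cast; ring

lemma hasDerivAt_branch_quad (h r : ℝ) :
    HasDerivAt (fun r : ℝ => -1/3 - 3*h/2 - (1 + 2*h)*(r - 1) - (2 + h)/2 * (r - 1)^2)
      (-(1+2*h) - (2+h)*(r-1)) r := by
  have hs : HasDerivAt (fun r : ℝ => r - 1) 1 r := (hasDerivAt_id r).sub_const 1
  have key := ((hs.const_mul (1+2*h)).const_sub (-1/3 - 3*h/2)).sub
    ((hs.pow 2).const_mul ((2+h)/2))
  have e : (fun r : ℝ => -1/3 - 3*h/2 - (1 + 2*h)*(r - 1) - (2 + h)/2 * (r - 1)^2)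
      = fun x : ℝ => (-1/3 - 3*h/2 - (1+2*h)*(x-1)) - (2+h)/2 * (x-1)^2 := by
    funext x; ring
  rw [e]
  refine key.congr_deriv ?_
  push_cast; ring

lemma hasDerivAt_branch_log (h r : ℝ) (hr : r < 1) :
    HasDerivAt (fun r : ℝ => -h * Real.log (1 - r)) (h/(1-r)) r := by
  have h1 : HasDerivAt (fun r : ℝ => 1 - r) (-1) r := (hasDerivAt_id r).const_sub 1
  have hne : (1:ℝ) - r ≠ 0 := by linarith
  have key := (h1.log hne).const_mul (-h)
  have e : (fun r : ℝ => -h * Real.log (1 - r)) = fun x : ℝ => -h * Real.log (1 - x) := rfl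
  rw [e]
  refine key.congr_deriv ?_
  field_simp

lemma hasDerivAt_branch_g3 (h l r : ℝ) (hl : l ≠ 0) :
    HasDerivAt (fun r : ℝ => -h * Real.log l + 3*h/2 - 2*h/l * (1 - r) + h/(2*l^2) * (1 - r)^2)
      (2*h/l - h/l^2*(1-r)) r := by
  have h1 : HasDerivAt (fun r : ℝ => 1 - r) (-1) r := (hasDerivAt_id r).const_sub 1
  have key := ((h1.const_mul (2*h/l)).const_sub (-h * Real.log l + 3*h/2)).add
    ((h1.pow 2).const_mul (h/(2*l^2)))
  have e : (fun r : ℝ => -h * Real.log l + 3*h/2 - 2*h/l * (1 - r) + h/(2*l^2) * (1 - r)^2)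
      = fun x : ℝ => (-h * Real.log l + 3*h/2 - 2*h/l * (1 - x)) + h/(2*l^2) * (1 - x)^2 := by
    funext x; ring
  rw [e]
  refine key.congr_deriv ?_
  push_cast; field_simp; ring

/-- The Lennard--Jones potential `F(r) = -h log(1-r) - r³/3 - h (r²/2 + r)`. -/
noncomputable def FLJ (h r : ℝ) : ℝ := -h * Real.log (1 - r) - r^3/3 - h * (r^2/2 + r)

/-- Its first derivative on `[0,1)`: `F'(r) = h/(1-r) - r² - h (r+1)`. -/
noncomputable def FLJ' (h r : ℝ) : ℝ := h/(1-r) - r^2 - h * (r+1)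

/-- Convex singular part `F_{1,λ}` of the regularized Lennard--Jones potential. -/
noncomputable def F1reg (h l r : ℝ) : ℝ :=
  if r < 0 then -r^3/l + h/2 * r^2 + h*r
  else if r < 1 - l then -h * Real.log (1 - r)
  else -h * Real.log l + 3*h/2 - 2*h/l * (1 - r) + h/(2*l^2) * (1 - r)^2

/-- Non-convex regular part `F̄₂` of the regularized Lennard--Jones potential. -/
noncomputable def F2reg (h r : ℝ) : ℝ :=
  if r < 1 then -r^3/3 - h*(r^2/2 + r)
  else -1/3 - 3*h/2 - (1 + 2*h)*(r - 1) - (2 + h)/2 * (r - 1)^2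

/-- The regularized potential `F_λ = F_{1,λ} + F̄₂`. -/
noncomputable def Freg (h l r : ℝ) : ℝ := F1reg h l r + F2reg h r

lemma hasDerivAt_F2 (h r : ℝ) :
    HasDerivAt (F2reg h)
      (if r < 1 then -r^2 - h*(r+1) else -(1+2*h) - (2+h)*(r-1)) r := by
  rcases lt_trichotomy r 1 with hr | hr | hr
  · rw [if_pos hr]
    refine (hasDerivAt_branch_cubic h r).congr_of_eventuallyEq ?_
    filter_upwards [Iio_mem_nhds hr] with x hx
    replace hx : x < 1 := hx
    simp [F2reg, hx]
  · rw [if_neg (by simp [hr])]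
    subst hr
    refine glue_hasDerivAt (f := fun r : ℝ => -r^3/3 - h*(r^2/2 + r))
      (g := fun r : ℝ => -1/3 - 3*h/2 - (1 + 2*h)*(r - 1) - (2 + h)/2 * (r - 1)^2)
      ?_ ?_ ?_ ?_
    · have := hasDerivAt_branch_cubic h 1
      convert this using 1; ring
    · exact hasDerivAt_branch_quad h 1
    · filter_upwards with x hx
      rcases lt_or_eq_of_le hx with hx' | hx'
      · simp [F2reg, hx']
      · subst hx'; simp [F2reg]; ring
    · filter_upwards with x hx
      simp [F2reg, not_lt.mpr hx]
  · rw [if_neg (by linarith)]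
    refine (hasDerivAt_branch_quad h r).congr_of_eventuallyEq ?_
    filter_upwards [Ioi_mem_nhds hr] with x hx
    replace hx : 1 < x := hx
    simp [F2reg, not_lt.mpr (le_of_lt hx)]

lemma hasDerivAt_F1 (h l r : ℝ) (hl : 0 < l) (hl1 : l < 1) (hr : 0 < r) :
    HasDerivAt (F1reg h l)
      (if r < 1 - l then h/(1-r) else 2*h/l - h/l^2*(1-r)) r := by
  have hlne : l ≠ 0 := ne_of_gt hl
  have h1l : 0 < 1 - l := by linarith
  rcases lt_trichotomy r (1 - l) with hc | hc | hc
  · rw [if_pos hc]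
    refine (hasDerivAt_branch_log h r (by linarith)).congr_of_eventuallyEq ?_
    filter_upwards [Ioo_mem_nhds hr hc] with x hx
    obtain ⟨hx1, hx2⟩ := hx
    simp [F1reg, not_lt.mpr (le_of_lt hx1), hx2]
  · rw [if_neg (by simp [hc])]
    subst hc
    refine glue_hasDerivAt (f := fun r : ℝ => -h * Real.log (1 - r))
      (g := fun r : ℝ => -h * Real.log l + 3*h/2 - 2*h/l * (1 - r) + h/(2*l^2) * (1 - r)^2)
      ?_ ?_ ?_ ?_
    · have := hasDerivAt_branch_log h (1-l) (by linarith)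
      convert this using 1
      rw [show (1:ℝ) - (1 - l) = l by ring]
      field_simp; ring
    · exact hasDerivAt_branch_g3 h l (1-l) hlne
    · filter_upwards [Ioi_mem_nhds h1l] with x hx hxle
      replace hx : 0 < x := hx
      rcases lt_or_eq_of_le hxle with hx' | hx'
      · simp [F1reg, not_lt.mpr (le_of_lt hx), hx']
      · subst hx'
        simp only [F1reg, not_lt.mpr (le_of_lt hx), if_neg, lt_irrefl, if_false]
        rw [show (1:ℝ) - (1 - l) = l by ring]
        field_simp
        ring
    · filter_upwards [Ioi_mem_nhds (show (0:ℝ) < 1 - l by linarith)] with x hx hxle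
      replace hx : 0 < x := hx
      simp [F1reg, not_lt.mpr (le_of_lt hx), not_lt.mpr hxle]
  · rw [if_neg (by linarith)]
    refine (hasDerivAt_branch_g3 h l r hlne).congr_of_eventuallyEq ?_
    filter_upwards [Ioi_mem_nhds hc] with x hx
    replace hx : 1 - l < x := hx
    have : 0 < x := lt_trans h1l hx
    simp [F1reg, not_lt.mpr (le_of_lt this), not_lt.mpr (le_of_lt hx)]

lemma FLJ'_eq (h r : ℝ) (hr : r ≠ 1) : FLJ' h r = r^2*(r-1+h)/(1-r) := by
  have hne : (1:ℝ) - r ≠ 0 := fun H => hr (by linarith [H, sub_eq_zero.mp H])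
  rw [FLJ']
  field_simp
  ring

/-- For `ρ ∈ (0,h)` there is `λ̄ ∈ (0,ρ]` such that for all `λ ∈ (0,λ̄]` and all
`r ≥ 1-ρ` one has `F_λ'(r) ≥ F'(1-ρ) > 0`; in particular
`min_{r ≥ 1-ρ} |F_λ'(r)| = F'(1-ρ)`. -/
theorem Freg_deriv_lower_bound_near_one (h ρ : ℝ)
    (hh : h ∈ Set.Ioo (0:ℝ) 1) (hρ : ρ ∈ Set.Ioo (0:ℝ) h) :
    ∃ lb ∈ Set.Ioc (0:ℝ) ρ, ∀ l ∈ Set.Ioc (0:ℝ) lb,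
      (∀ r : ℝ, 1 - ρ ≤ r → FLJ' h (1 - ρ) ≤ deriv (Freg h l) r) ∧
      0 < FLJ' h (1 - ρ) ∧
      IsLeast ((fun r => |deriv (Freg h l) r|) '' Set.Ici (1 - ρ)) (FLJ' h (1 - ρ)) := by
  obtain ⟨hh0, hh1⟩ := hh
  obtain ⟨hρ0, hρh⟩ := hρ
  have hρ1 : ρ < 1 := lt_trans hρh hh1
  set C := FLJ' h (1 - ρ) with hC
  have hCval : C = (1-ρ)^2*(h-ρ)/ρ := by
    rw [hC, FLJ'_eq h (1-ρ) (by intro H; apply ne_of_gt hρ0; linarith)]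
    rw [show (1:ℝ) - (1 - ρ) = ρ by ring, show (1:ℝ) - ρ - 1 + h = h - ρ by ring]
  have hCpos : 0 < C := by
    rw [hCval]
    apply div_pos _ hρ0
    have h1 : 0 < 1 - ρ := by linarith
    exact mul_pos (pow_pos h1 2) (by linarith)
  set K := 3 + 3*h + C with hK
  have hK0 : 0 < K := by rw [hK]; linarith
  refine ⟨min ρ (h/K), ⟨lt_min hρ0 (div_pos hh0 hK0), min_le_left _ _⟩, ?_⟩
  rintro l ⟨hl0, hlle⟩
  have hlρ : l ≤ ρ := le_trans hlle (min_le_left _ _)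
  have hlK : l * K ≤ h := by
    have := le_trans hlle (min_le_right _ _)
    rwa [le_div_iff₀ hK0] at this
  have hl1 : l < 1 := lt_of_le_of_lt hlρ hρ1
  have hKl : K ≤ h / l := by rw [le_div_iff₀ hl0]; nlinarith
  have hderiv : ∀ r : ℝ, 1 - ρ ≤ r → deriv (Freg h l) r =
      (if r < 1 - l then h/(1-r) else 2*h/l - h/l^2*(1-r)) +
      (if r < 1 then -r^2 - h*(r+1) else -(1+2*h) - (2+h)*(r-1)) := by
    intro r hr
    have h0r : 0 < r := by linarith
    exact ((hasDerivAt_F1 h l r hl0 hl1 h0r).add (hasDerivAt_F2 h r)).deriv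
  have hmain : ∀ r : ℝ, 1 - ρ ≤ r → C ≤ deriv (Freg h l) r := by
    intro r hr
    rw [hderiv r hr]
    rcases lt_or_ge r (1 - l) with hc | hc
    · rw [if_pos hc, if_pos (by linarith)]
      have h1r : 0 < 1 - r := by linarith
      have ha : (0:ℝ) ≤ r - (1 - ρ) := by linarith
      have key : (1-ρ)^2*(h-ρ)/ρ ≤ r^2*(r-1+h)/(1-r) := by
        rw [div_le_div_iff₀ hρ0 h1r]
        have t1 : (0:ℝ) ≤ ρ * (1-ρ)^2 * (r - (1-ρ)) :=
          mul_nonneg (mul_nonneg hρ0.le (sq_nonneg _)) ha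
        have t2 : (0:ℝ) ≤ ρ * (2*(1-ρ)*(r-(1-ρ)) + (r-(1-ρ))^2) * (h - ρ + (r-(1-ρ))) := by
          apply mul_nonneg (mul_nonneg hρ0.le _) (by linarith)
          nlinarith [mul_nonneg (show (0:ℝ) ≤ 1-ρ by linarith) ha, sq_nonneg (r-(1-ρ))]
        have t3 : (0:ℝ) ≤ (1-ρ)^2 * (h - ρ) * (r - (1-ρ)) :=
          mul_nonneg (mul_nonneg (sq_nonneg _) (by linarith)) ha
        nlinarith [t1, t2, t3]
      have e : r^2*(r-1+h)/(1-r) = h/(1-r) + (-r^2 - h*(r+1)) := by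
        field_simp
        ring
      rw [e] at key
      rw [hCval]
      linarith
    · rw [if_neg (not_lt.mpr hc)]
      rcases lt_or_ge r 1 with hc1 | hc1
      · rw [if_pos hc1]
        have e1 : h/l^2*(1-r) ≤ h/l := by
          have step : h/l^2*(1-r) ≤ h/l^2*l :=
            mul_le_mul_of_nonneg_left (by linarith) (by positivity)
          have e2 : h/l^2*l = h/l := by field_simp
          linarith [step, e2.le]
        have hr0 : (0:ℝ) ≤ r := by linarith
        have hr2 : r^2 ≤ 1 := by nlinarith [mul_nonneg (show (0:ℝ) ≤ 1-r by linarith) (show (0:ℝ) ≤ 1+r by linarith)]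
        have hhr : h*r ≤ h := by nlinarith [mul_nonneg hh0.le (show (0:ℝ) ≤ 1-r by linarith)]
        rw [show 2*h/l = 2*(h/l) by ring]
        linarith [hKl, e1, hr2, hhr]
      · rw [if_neg (not_lt.mpr hc1)]
        have hll : h/l ≤ h/l^2 := by
          rw [div_le_div_iff₀ hl0 (by positivity)]
          nlinarith
        have h2h : (2+h) ≤ h/l^2 := by
          have : (2+h) ≤ K := by rw [hK]; linarith
          linarith [hKl, hll]
        have hmm : (2+h)*(r-1) ≤ h/l^2*(r-1) :=
          mul_le_mul_of_nonneg_right h2h (by linarith)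
        rw [show 2*h/l = 2*(h/l) by ring]
        linarith [hKl, hmm, hCpos, hh0]
  refine ⟨hmain, hCpos, ⟨⟨1-ρ, Set.self_mem_Ici, ?_⟩, ?_⟩⟩
  · have hval : deriv (Freg h l) (1-ρ) = C := by
      rw [hderiv (1-ρ) le_rfl, if_pos (by linarith : (1:ℝ)-ρ < 1)]
      rcases lt_or_ge (1-ρ) (1-l) with hcc | hcc
      · rw [if_pos hcc, hC, FLJ', show (1:ℝ) - (1 - ρ) = ρ by ring]
        ring
      · have hlρ' : l = ρ := le_antisymm hlρ (by linarith)
        subst hlρ'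
        rw [if_neg (not_lt.mpr hcc), hC, FLJ', show (1:ℝ) - (1 - l) = l by ring]
        field_simp
        ring
    simp only
    rw [hval, abs_of_pos hCpos]
  · rintro y ⟨r, hr, rfl⟩
    exact le_trans (hmain r hr) (le_abs_self _)
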